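/- Let D be a closed half-plane in the complex plane, i.e. D = {z ∈ ℂ : re(α·z) ≤ t} for some nonzero α ∈ ℂ and t ∈ ℝ. Then for every positive integer n and all complex numbers z₁, z₂, …, zₙ ∈ D, there exists z ∈ D such that zⁿ = z₁ · z₂ ⋯ zₙ. -/

import Mathlib

open Real Set Finset Complex


lemma logNegCos_concave :
    ConcaveOn ℝ (Set.Ioo (π/2) (π + π/2)) (fun y => Real.log (-Real.cos y)) := by
  have hcos : ∀ x ∈ Set.Ioo (π/2) (π + π/2), Real.cos x < 0 := fun x hx =>
    Real.cos_neg_of_pi_div_two_lt_of_lt hx.1 hx.2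
  refine (strictConcaveOn_of_deriv2_neg' (convex_Ioo _ _) ?_ ?_).concaveOn
  · exact (Real.continuous_cos.neg.continuousOn).log
      (fun x hx => (neg_pos.2 (hcos x hx)).ne')
  · intro x hx
    have hc : Real.cos x < 0 := hcos x hx
    have hopen : IsOpen {y : ℝ | Real.cos y < 0} := isOpen_lt Real.continuous_cos continuous_const
    have hd1 : ∀ y : ℝ, Real.cos y < 0 →
        HasDerivAt (fun y => Real.log (-Real.cos y)) (-Real.tan y) y := by
      intro y hy
      have h1 : HasDerivAt (fun y => -Real.cos y) (Real.sin y) y := by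
        exact (Real.hasDerivAt_cos y).neg.congr_deriv (neg_neg _)
      have h2 := (Real.hasDerivAt_log (x := -Real.cos y) (neg_pos.2 hy).ne').comp y h1
      refine h2.congr_deriv ?_
      rw [Real.tan_eq_sin_div_cos]
      field_simp
    have hEq : deriv (fun y => Real.log (-Real.cos y)) =ᶠ[nhds x] fun y => -Real.tan y :=
      Filter.eventually_of_mem (hopen.mem_nhds hc) (fun y hy => (hd1 y hy).deriv)
    have h2d : HasDerivAt (fun y => -Real.tan y) (-(1 / Real.cos x ^ 2)) x :=
      (Real.hasDerivAt_tan hc.ne).neg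
    have : deriv^[2] (fun y => Real.log (-Real.cos y)) x = -(1 / Real.cos x ^ 2) := by
      simp only [Function.iterate_succ, Function.iterate_zero, Function.comp, id]
      rw [hEq.deriv_eq]
      exact h2d.deriv
    rw [this]
    have h0 : (0:ℝ) < 1 / Real.cos x ^ 2 := by
      have : Real.cos x ≠ 0 := hc.ne
      positivity
    linarith
lemma halfplane_aux_nonneg (t : ℝ) (ht : 0 ≤ t) (n : ℕ) (hn : 0 < n) (u : Fin n → ℂ)
    (hu : ∀ i, (u i).re ≤ t) : ∃ v : ℂ, v.re ≤ t ∧ v ^ n = ∏ i, u i := by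
  rcases eq_or_lt_of_le (show 1 ≤ n from hn) with h1 | h1
  · -- n = 1
    refine ⟨u ⟨0, hn⟩ , hu _, ?_⟩
    subst h1
    simp
  · obtain ⟨w0, hw0⟩ := IsAlgClosed.exists_pow_nat_eq (∏ i, u i) hn
    set ζ : ℂ := Complex.exp (2 * Real.pi * Complex.I / n)
    have hζ : IsPrimitiveRoot ζ n := Complex.isPrimitiveRoot_exp n hn.ne'
    have hsum : ∑ k ∈ Finset.range n, ζ ^ k = 0 := hζ.geom_sum_eq_zero h1
    have hre : ∑ k ∈ Finset.range n, (w0 * ζ ^ k).re = 0 := by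
      rw [← Complex.re_sum, ← Finset.mul_sum, hsum, mul_zero, Complex.zero_re]
    have hne : (Finset.range n).Nonempty := ⟨0, Finset.mem_range.2 hn⟩
    obtain ⟨k, -, hk⟩ : ∃ k ∈ Finset.range n, (w0 * ζ ^ k).re ≤ 0 := by
      refine Finset.exists_le_of_sum_le hne ?_
      rw [hre]
      simp
    refine ⟨w0 * ζ ^ k, hk.trans ht, ?_⟩
    rw [mul_pow, ← pow_mul, mul_comm k n, pow_mul, hζ.pow_eq_one, one_pow, mul_one, hw0]
set_option maxHeartbeats 1000000 in
lemma halfplane_aux_neg (t : ℝ) (ht : t < 0) (n : ℕ) (hn : 0 < n) (u : Fin n → ℂ)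
    (hu : ∀ i, (u i).re ≤ t) : ∃ v : ℂ, v.re ≤ t ∧ v ^ n = ∏ i, u i := by
  have hu0 : ∀ i, u i ≠ 0 := by
    intro i h
    have := hu i
    rw [h] at this
    simp at this
    linarith
  set θ : Fin n → ℝ := fun i => if 0 < (u i).arg then (u i).arg else (u i).arg + 2 * π with hθ
  set x : Fin n → ℝ := fun i => Real.log ‖u i‖ with hx
  have habs : ∀ i, 0 < ‖u i‖ := fun i => norm_pos_iff.mpr (hu0 i)
  -- u i = exp (x i + θ i * I)
  have hrepr : ∀ i, u i = Complex.exp (x i + θ i * Complex.I) := by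
    intro i
    have h1 : (↑‖u i‖ : ℂ) * Complex.exp ((u i).arg * Complex.I) = u i :=
      Complex.norm_mul_exp_arg_mul_I (u i)
    have h2 : (↑‖u i‖ : ℂ) = Complex.exp (x i) := by
      rw [hx]
      rw [← Complex.ofReal_exp, Real.exp_log (habs i)]
    simp only [hθ]
    by_cases hpos : 0 < (u i).arg
    · simp only [hpos, if_true]
      rw [Complex.exp_add, ← h2, h1]
    · simp only [hpos, if_false]
      push_cast
      rw [add_mul, ← add_assoc, Complex.exp_add, Complex.exp_add, ← h2]
      rw [show ((2:ℂ) * π * Complex.I) = 2 * ↑π * Complex.I by push_cast; ring] at *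
      rw [Complex.exp_two_pi_mul_I, mul_one, h1]
  have hre : ∀ i, Real.exp (x i) * Real.cos (θ i) ≤ t := by
    intro i
    have h := hu i
    rw [hrepr i] at h
    simpa [Complex.exp_re] using h
  -- cos of θ
  have hcosθ : ∀ i, Real.cos (θ i) < 0 := by
    intro i
    nlinarith [Real.exp_pos (x i), hre i]
  have hθmem : ∀ i, θ i ∈ Set.Ioo (π/2) (π + π/2) := by
    intro i
    have harg := Complex.arg_mem_Ioc (u i)
    have hc : Real.cos (θ i) < 0 := hcosθ i
    simp only [hθ] at hc ⊢
    by_cases hpos : 0 < (u i).arg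
    · simp only [hpos, if_true] at hc ⊢
      constructor
      · by_contra h
        push_neg at h
        have : 0 ≤ Real.cos (u i).arg :=
          Real.cos_nonneg_of_mem_Icc ⟨by linarith [Real.pi_pos], h⟩
        linarith
      · have := harg.2
        have hπ := Real.pi_pos
        linarith
    · simp only [hpos, if_false] at hc ⊢
      push_neg at hpos
      have hπ := Real.pi_pos
      constructor
      · linarith [harg.1]
      · by_contra h
        push_neg at h
        have h2 : Real.cos ((u i).arg + 2 * π) = Real.cos (u i).arg := Real.cos_add_two_pi _
        have h3 : Real.cos ((u i).arg + 2 * π) = Real.cos ((u i).arg + 2 * π - 2*π + 2*π) := by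
          ring_nf
        have : 0 ≤ Real.cos (u i).arg :=
          Real.cos_nonneg_of_mem_Icc ⟨by linarith, by linarith⟩
        linarith
  -- the constraint on x
  have hxlb : ∀ i, Real.log (-t) - Real.log (-Real.cos (θ i)) ≤ x i := by
    intro i
    have hc := hcosθ i
    have h1 : (-t) / (-Real.cos (θ i)) ≤ Real.exp (x i) := by
      rw [div_le_iff₀ (by linarith)]
      nlinarith [hre i]
    have h2 := Real.log_le_log (div_pos (by linarith) (by linarith)) h1
    rwa [Real.log_div (by linarith) (by linarith), Real.log_exp] at h2
  set Y : ℝ := (∑ i, θ i) / n with hY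
  set X : ℝ := (∑ i, x i) / n with hX
  have hn' : (0:ℝ) < n := Nat.cast_pos.2 hn
  have hsumθ : ∑ i, (1/(n:ℝ)) • θ i = Y := by
    rw [hY, Finset.sum_div]
    simp [div_eq_inv_mul, smul_eq_mul]
  have hYmem : Y ∈ Set.Ioo (π/2) (π + π/2) := by
    rw [← hsumθ]
    refine (convex_Ioo _ _).sum_mem (fun i _ => by positivity) ?_ (fun i _ => hθmem i)
    rw [Finset.sum_const, Finset.card_univ, Fintype.card_fin]
    rw [nsmul_eq_mul]
    field_simp
  have hcosY : Real.cos Y < 0 := Real.cos_neg_of_pi_div_two_lt_of_lt hYmem.1 hYmem.2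
  -- Jensen
  have hjensen : ∑ i, (1/(n:ℝ)) • Real.log (-Real.cos (θ i)) ≤ Real.log (-Real.cos Y) := by
    have h := logNegCos_concave.le_map_sum (t := Finset.univ) (w := fun _ : Fin n => 1/(n:ℝ))
      (p := θ) (fun i _ => by positivity)
      (by rw [Finset.sum_const, Finset.card_univ, Fintype.card_fin]; rw [nsmul_eq_mul]; field_simp)
      (fun i _ => hθmem i)
    rw [hsumθ] at h
    exact h
  have hXlb : Real.log (-t) - Real.log (-Real.cos Y) ≤ X := by
    have h1 : ∑ i, (1/(n:ℝ)) • (Real.log (-t) - Real.log (-Real.cos (θ i))) ≤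
        ∑ i, (1/(n:ℝ)) • x i := by
      refine Finset.sum_le_sum (fun i _ => ?_)
      exact smul_le_smul_of_nonneg_left (hxlb i) (by positivity)
    have h2 : ∑ i, (1/(n:ℝ)) • (Real.log (-t) - Real.log (-Real.cos (θ i)))
        = Real.log (-t) - ∑ i, (1/(n:ℝ)) • Real.log (-Real.cos (θ i)) := by
      simp only [smul_eq_mul, mul_sub, Finset.sum_sub_distrib]
      rw [Finset.sum_const, Finset.card_univ, Fintype.card_fin]
      congr 1
      rw [nsmul_eq_mul]
      field_simp
    have h3 : ∑ i, (1/(n:ℝ)) • x i = X := by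
      rw [hX, Finset.sum_div]
      simp [div_eq_inv_mul, smul_eq_mul]
    rw [h2, h3] at h1
    linarith [hjensen]
  refine ⟨Complex.exp (X + Y * Complex.I), ?_, ?_⟩
  · have hvre : (Complex.exp ((X:ℂ) + Y * Complex.I)).re = Real.exp X * Real.cos Y := by
      simp [Complex.exp_re]
    rw [hvre]
    have hE : (-t) / (-Real.cos Y) ≤ Real.exp X := by
      have := Real.exp_le_exp.2 hXlb
      rwa [Real.exp_sub, Real.exp_log (by linarith), Real.exp_log (by linarith)] at this
    calc Real.exp X * Real.cos Y ≤ ((-t)/(-Real.cos Y)) * Real.cos Y :=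
          mul_le_mul_of_nonpos_right hE (le_of_lt hcosY)
      _ = t := by
          field_simp
          exact mul_div_cancel_right₀ t hcosY.ne
  · rw [← Complex.exp_nat_mul]
    rw [Finset.prod_congr rfl (fun i _ => hrepr i), ← Complex.exp_sum]
    congr 1
    rw [hX, hY]
    have hnc : (n:ℂ) ≠ 0 := Nat.cast_ne_zero.2 hn.ne'
    push_cast
    rw [Finset.sum_add_distrib, ← Finset.sum_mul]
    field_simp

/-- Closed half-plane case of Proposition 2: for z₁,…,zₙ in a closed half-plane
D = {z : re(α z) ≤ t}, there is z ∈ D with zⁿ = z₁⋯zₙ. -/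
theorem geometric_mean_halfPlane (α : ℂ) (hα : α ≠ 0) (t : ℝ)
    (n : ℕ) (hn : 0 < n) (z : Fin n → ℂ)
    (hz : ∀ i, z i ∈ {w : ℂ | (α * w).re ≤ t}) :
    ∃ w ∈ {w : ℂ | (α * w).re ≤ t}, w ^ n = ∏ i, z i := by
  have key : ∃ v : ℂ, v.re ≤ t ∧ v ^ n = ∏ i, α * z i := by
    rcases lt_or_ge t 0 with hs | hs
    · exact halfplane_aux_neg t hs n hn _ (fun i => hz i)
    · exact halfplane_aux_nonneg t hs n hn _ (fun i => hz i)
  obtain ⟨v, hv1, hv2⟩ := key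
  have hαn : α ^ n ≠ 0 := pow_ne_zero n hα
  refine ⟨v / α, ?_, ?_⟩
  · have h : α * (v / α) = v := by field_simp
    show (α * (v / α)).re ≤ t
    rw [h]; exact hv1
  · have hprod : ∏ i, α * z i = α ^ n * ∏ i, z i := by
      rw [Finset.prod_mul_distrib, Finset.prod_const, Finset.card_univ, Fintype.card_fin]
    rw [div_pow, hv2, hprod, mul_div_cancel_left₀ _ hαn]
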